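/- arXiv:1110.5464 — 2 statements merged into one kernel-verified Lean document; each statement's English description precedes it below -/
import Mathlib

section
/- On the Hirzebruch surface F_1, for integers b, k with k ≥ b ≥ 4, dim Ext^1(B, A) = 0 if b ≤ k < (3b-3)/2, and dim Ext^1(B, A) = 4k - 6b + 7 if k ≥ (3b-3)/2, where A ≡ 2C_0 + (2b-k-2)f and B ≡ C_0 + (k-b+2)f. -/
/-- `h^0(ℙ¹, 𝒪(m)) = max(m+1, 0)`. -/
def h0P1 (m : ℤ) : ℕ := (m + 1).toNat

/-- `h^1(ℙ¹, 𝒪(m)) = max(-m-1, 0)`. -/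
def h1P1 (m : ℤ) : ℕ := (-m - 1).toNat

/-- Cohomology `h^i` of the line bundle `𝒪(a·C₀ + c·f)` on the Hirzebruch surface
`𝔽₁ = ℙ(𝒪 ⊕ 𝒪(-1))` for `a ≥ 0`, computed via the Leray isomorphism from the
pushforward `π_*(𝒪(a C₀ + c f)) = ⊕_{j=0}^{a} 𝒪_{ℙ¹}(c - j)` along `π : 𝔽₁ → ℙ¹`. -/
def hF1nn (i : ℕ) (a c : ℤ) : ℕ :=
  match i with
  | 0 => (Finset.range (a.toNat + 1)).sum fun j => h0P1 (c - (j : ℤ))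
  | 1 => (Finset.range (a.toNat + 1)).sum fun j => h1P1 (c - (j : ℤ))
  | _ => 0

/-- `h^i(𝔽₁, 𝒪(a·C₀ + c·f))`, where `C₀` is the section with `C₀² = -1` and `f` a fiber.
For `a ≤ -2` it is computed by Serre duality with `K_{𝔽₁} = -2C₀ - 3f`;
for `a = -1` all cohomology vanishes. -/
def hF1 (i : ℕ) (a c : ℤ) : ℕ :=
  if 0 ≤ a then hF1nn i a c
  else if a = -1 then 0
  else if i ≤ 2 then hF1nn (2 - i) (-2 - a) (-3 - c) else 0

/-- On `F1`, with `A = 2C0 + (2b-k-2)f` and `B = C0 + (k-b+2)f` and `k >= b >= 4`,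
`dim Ext^1(B, A) = h^1(F1, A - B)` (with `A - B = C0 + (3b-2k-4)f`) equals `0` when
`b <= k < (3b-3)/2` and equals `4k - 6b + 7` when `k >= (3b-3)/2`. -/
theorem stmt4 (b k : ℤ) (hb : 4 ≤ b) (hbk : b ≤ k) :
    (2*k < 3*b - 3 → hF1 1 1 (3*b - 2*k - 4) = 0) ∧
    (3*b - 3 ≤ 2*k → (hF1 1 1 (3*b - 2*k - 4) : ℤ) = 4*k - 6*b + 7) := by
  have h : hF1 1 1 (3*b - 2*k - 4) = (2*k - 3*b + 3).toNat + (2*k - 3*b + 4).toNat := by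
    simp [hF1, hF1nn, h1P1, Finset.sum_range_succ]
    omega
  constructor <;> intro hk <;> omega
end

section
/- Let E = A ⊕ B on F_1 with A ≡ 2C_0 + (2b-k-2)f, B ≡ C_0 + (k-b+2)f and b ≤ k < (3b-3)/2, b ≥ 4. Then h^0(F_1, E ⊗ E^∨) = 6b - 4k - 5. -/
/-- Let `E = A ⊕ B` on `F1` with `A = 2C0 + (2b-k-2)f`, `B = C0 + (k-b+2)f` and
`b <= k < (3b-3)/2`, `b >= 4`. Since `E ⊗ E^∨ ≅ O ⊕ O ⊕ (A-B) ⊕ (B-A)` with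
`A - B = C0 + (3b-2k-4)f` and `B - A = -C0 + (2k-3b+4)f`, one has
`h^0(F1, E ⊗ E^∨) = 6b - 4k - 5`. -/
theorem stmt12 (b k : ℤ) (hb : 4 ≤ b) (hbk : b ≤ k) (hk : 2*k < 3*b - 3) :
    ((2 * hF1 0 0 0 + hF1 0 1 (3*b - 2*k - 4) + hF1 0 (-1) (2*k - 3*b + 4) : ℕ) : ℤ)
      = 6*b - 4*k - 5 := by
  simp only [hF1, hF1nn, h0P1]
  norm_num [Finset.sum_range_succ]
  omega
end
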